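/- For fixed x > 0 and t ∈ (0,1), the limit as q → 0⁺ of K(x,t) = x^t/(1+x) · (1+1/x)_q^t · (1+x)_q^{1-t} equals x^t + x^{t-1}. In particular, K(x,t) is not constant in x for such t. -/

import Mathlib

noncomputable def qpochInf (q a : ℝ) : ℝ := ∏' j : ℕ, (1 + q ^ j * a)

noncomputable def qpochT (q a t : ℝ) : ℝ := qpochInf q a / qpochInf q (q ^ t * a)

noncomputable def K (q x t : ℝ) : ℝ :=
  x ^ t / (1 + x) * qpochT q (1 / x) t * qpochT q x (1 - t)

open Filter Real Set

lemma summable_log_aux {q b : ℝ} (hq : 0 < q) (hq1 : q < 1) (hb : 0 ≤ b) :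
    Summable (fun j : ℕ => Real.log (1 + q ^ j * b)) := by
  have hpos : ∀ j : ℕ, 0 ≤ q ^ j * b := fun j => mul_nonneg (pow_nonneg hq.le j) hb
  refine Summable.of_nonneg_of_le (fun j => Real.log_nonneg (by linarith [hpos j]))
    (fun j => ?_) ((summable_geometric_of_lt_one hq.le hq1).mul_right b)
  have := Real.log_le_sub_one_of_pos (x := 1 + q ^ j * b) (by linarith [hpos j])
  linarith

lemma qpochInf_eq_exp {q b : ℝ} (hq : 0 < q) (hq1 : q < 1) (hb : 0 ≤ b) :
    qpochInf q b = Real.exp (∑' j : ℕ, Real.log (1 + q ^ j * b)) := by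
  have hpos : ∀ j : ℕ, 0 < 1 + q ^ j * b := fun j => by
    have := mul_nonneg (pow_nonneg hq.le j) hb; linarith
  have := Real.rexp_tsum_eq_tprod (f := fun j : ℕ => 1 + q ^ j * b)
    hpos (summable_log_aux hq hq1 hb)
  exact this.symm

lemma one_le_qpochInf {q b : ℝ} (hq : 0 < q) (hq1 : q < 1) (hb : 0 ≤ b) :
    1 ≤ qpochInf q b := by
  rw [qpochInf_eq_exp hq hq1 hb]
  refine Real.one_le_exp (tsum_nonneg fun j => Real.log_nonneg ?_)
  have := mul_nonneg (pow_nonneg hq.le j) hb; linarith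

lemma qpochInf_le_exp {q b : ℝ} (hq : 0 < q) (hq1 : q < 1) (hb : 0 ≤ b) :
    qpochInf q b ≤ Real.exp ((1 - q)⁻¹ * b) := by
  rw [qpochInf_eq_exp hq hq1 hb]
  refine Real.exp_le_exp.2 ?_
  have h1 : ∑' j : ℕ, q ^ j * b = (1 - q)⁻¹ * b := by
    rw [tsum_mul_right, tsum_geometric_of_lt_one hq.le hq1]
  rw [← h1]
  refine Summable.tsum_le_tsum (fun j => ?_) (summable_log_aux hq hq1 hb)
    ((summable_geometric_of_lt_one hq.le hq1).mul_right b)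
  have hpos : (0:ℝ) ≤ q ^ j * b := mul_nonneg (pow_nonneg hq.le j) hb
  have := Real.log_le_sub_one_of_pos (x := 1 + q ^ j * b) (by linarith)
  linarith

lemma tendsto_qpochInf_one {f : ℝ → ℝ}
    (hf : Tendsto f (nhdsWithin 0 (Ioi 0)) (nhds 0))
    (hf0 : ∀ᶠ q in nhdsWithin 0 (Ioi 0), 0 ≤ f q) :
    Tendsto (fun q => qpochInf q (f q)) (nhdsWithin 0 (Ioi 0)) (nhds 1) := by
  have hmem : ∀ᶠ q in nhdsWithin 0 (Ioi 0), q ∈ Ioo (0:ℝ) 1 :=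
    Ioo_mem_nhdsGT_of_mem (by constructor <;> norm_num)
  have hupper : Tendsto (fun q : ℝ => Real.exp ((1 - q)⁻¹ * f q))
      (nhdsWithin 0 (Ioi 0)) (nhds 1) := by
    have h1 : Tendsto (fun q : ℝ => (1 - q)⁻¹ * f q) (nhdsWithin 0 (Ioi 0)) (nhds 0) := by
      have : Tendsto (fun q : ℝ => (1 - q)⁻¹) (nhdsWithin 0 (Ioi 0)) (nhds 1) := by
        have : Tendsto (fun q : ℝ => (1 - q)⁻¹) (nhds 0) (nhds 1) := by
          have : ContinuousAt (fun q : ℝ => (1 - q)⁻¹) 0 := by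
            apply ContinuousAt.inv₀ (by fun_prop); norm_num
          simpa using this.tendsto
        exact this.mono_left nhdsWithin_le_nhds
      simpa using this.mul hf
    have := Real.continuous_exp.continuousAt (x := 0)
    simpa [Function.comp_def] using (Real.continuous_exp.tendsto 0).comp h1
  refine tendsto_of_tendsto_of_tendsto_of_le_of_le' tendsto_const_nhds hupper ?_ ?_
  · filter_upwards [hmem, hf0] with q hq hfq
    exact one_le_qpochInf hq.1 hq.2 hfq
  · filter_upwards [hmem, hf0] with q hq hfq
    exact qpochInf_le_exp hq.1 hq.2 hfq

lemma multipliable_aux {q b : ℝ} (hq : 0 < q) (hq1 : q < 1) (hb : 0 ≤ b) :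
    Multipliable (fun j : ℕ => 1 + q ^ j * b) := by
  have hpos : ∀ j : ℕ, 0 < 1 + q ^ j * b := fun j => by
    have := mul_nonneg (pow_nonneg hq.le j) hb; linarith
  exact Real.multipliable_of_summable_log (f := fun j : ℕ => 1 + q ^ j * b)
    hpos (summable_log_aux hq hq1 hb)

lemma qpochInf_split {q b : ℝ} (hq : 0 < q) (hq1 : q < 1) (hb : 0 ≤ b) :
    qpochInf q b = (1 + b) * qpochInf q (q * b) := by
  have hqb : 0 ≤ q * b := mul_nonneg hq.le hb
  have hmult : Multipliable (fun n : ℕ => 1 + q ^ (n + 1) * b) :=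
    (multipliable_aux hq hq1 hqb).congr (fun n => by ring)
  have h := tprod_eq_zero_mul' (f := fun j : ℕ => 1 + q ^ j * b) hmult
  simp only [pow_zero, one_mul] at h
  rw [qpochInf, h, qpochInf]
  congr 1
  exact tprod_congr fun j => by ring

lemma tendsto_rpow_zero {t : ℝ} (ht : 0 < t) :
    Tendsto (fun q : ℝ => q ^ t) (nhdsWithin 0 (Ioi 0)) (nhds 0) := by
  have : ContinuousAt (fun q : ℝ => q ^ t) 0 :=
    Real.continuousAt_rpow_const 0 t (Or.inr ht.le)
  have h := this.tendsto
  rw [Real.zero_rpow ht.ne'] at h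
  exact h.mono_left nhdsWithin_le_nhds

lemma tendsto_qpochT {a t : ℝ} (ha : 0 < a) (ht : 0 < t) :
    Tendsto (fun q => qpochT q a t) (nhdsWithin 0 (Ioi 0)) (nhds (1 + a)) := by
  have hmem : ∀ᶠ q in nhdsWithin 0 (Ioi 0), q ∈ Ioo (0:ℝ) 1 :=
    Ioo_mem_nhdsGT_of_mem (by constructor <;> norm_num)
  have hq0 : ∀ᶠ q : ℝ in nhdsWithin 0 (Ioi 0), 0 < q := self_mem_nhdsWithin
  have hnum : Tendsto (fun q : ℝ => qpochInf q (q * a)) (nhdsWithin 0 (Ioi 0)) (nhds 1) := by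
    refine tendsto_qpochInf_one ?_ ?_
    · have : Tendsto (fun q : ℝ => q * a) (nhds 0) (nhds (0 * a)) :=
        (continuous_id.mul continuous_const).tendsto 0
      simpa using this.mono_left nhdsWithin_le_nhds
    · filter_upwards [hq0] with q hq; positivity
  have hden : Tendsto (fun q : ℝ => qpochInf q (q ^ t * a)) (nhdsWithin 0 (Ioi 0)) (nhds 1) := by
    refine tendsto_qpochInf_one ?_ ?_
    · simpa using (tendsto_rpow_zero ht).mul_const a
    · filter_upwards [hq0] with q hq
      have : (0:ℝ) ≤ q ^ t := Real.rpow_nonneg hq.le t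
      positivity
  have hlim : Tendsto (fun q : ℝ => (1 + a) * qpochInf q (q * a) / qpochInf q (q ^ t * a))
      (nhdsWithin 0 (Ioi 0)) (nhds (1 + a)) := by
    have := ((tendsto_const_nhds (x := (1 + a)) (f := nhdsWithin (0:ℝ) (Ioi 0))).mul
      hnum).div hden one_ne_zero
    simpa [Pi.div_def] using this
  refine hlim.congr' ?_
  filter_upwards [hmem] with q hq
  rw [qpochT, qpochInf_split hq.1 hq.2 ha.le]

theorem stmt_3 (x t : ℝ) (hx : 0 < x) (ht : t ∈ Set.Ioo (0 : ℝ) 1) :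
    Filter.Tendsto (fun q : ℝ => K q x t) (nhdsWithin 0 (Set.Ioi 0))
      (nhds (x ^ t + x ^ (t - 1))) := by
  obtain ⟨ht0, ht1⟩ := ht
  have h1 : Tendsto (fun q => qpochT q (1 / x) t) (nhdsWithin 0 (Ioi 0))
      (nhds (1 + 1 / x)) := tendsto_qpochT (by positivity) ht0
  have h2 : Tendsto (fun q => qpochT q x (1 - t)) (nhdsWithin 0 (Ioi 0))
      (nhds (1 + x)) := tendsto_qpochT hx (by linarith)
  have := ((tendsto_const_nhds (x := x ^ t / (1 + x))
    (f := nhdsWithin (0:ℝ) (Ioi 0))).mul h1).mul h2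
  have heq : x ^ t / (1 + x) * (1 + 1 / x) * (1 + x) = x ^ t + x ^ (t - 1) := by
    have hx1 : (0:ℝ) < 1 + x := by linarith
    rw [Real.rpow_sub hx, Real.rpow_one]
    field_simp
  rw [← heq]
  exact this
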